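/- Let W be a d'-dimensional Brownian motion on (Ω,F,P) on [t,T] with W_t = 0, F^{t,0}_s its raw filtration, and fix u ∈ [t,T]. Let P_ω be a regular conditional probability given F^{t,0}_u. For P-a.e. ω, the P_ω-augmentation of the filtration F^{u,0}_s = σ(W_r − W_u : r ∈ [u,s]), s ∈ [u,T], coincides with the P_ω-augmentation of F^{t,0}_s. In particular, for P-a.e. ω, every F^{t,0}_s-measurable set belongs to the P_ω-augmentation of F^{u,0}_s for all s ∈ [u,T]. -/

import Mathlib

open MeasureTheory Filter Set

noncomputable section

/-- The raw filtration generated by a process `W` on the time interval `[t,s]`. -/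
def rawFilt {Ω : Type*} {E : Type*} [MeasurableSpace E] (W : ℝ → Ω → E) (t s : ℝ) :
    MeasurableSpace Ω :=
  ⨆ u ∈ Set.Icc t s, MeasurableSpace.comap (W u) inferInstance

/-- The filtration generated by the increments of `W` after time `u`. -/
def incrFilt {Ω : Type*} {d' : ℕ} (W : ℝ → Ω → Fin d' → ℝ) (u s : ℝ) :
    MeasurableSpace Ω :=
  ⨆ r ∈ Set.Icc u s, MeasurableSpace.comap (fun ω => W r ω - W u ω) inferInstance

/-- Augmentation of a σ-algebra `m` with the `μ`-null sets. -/
def nullAug {Ω : Type*} (m0 : MeasurableSpace Ω) (μ : @MeasureTheory.Measure Ω m0)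
    (m : MeasurableSpace Ω) : MeasurableSpace Ω :=
  m ⊔ MeasurableSpace.generateFrom {N | ∃ A, MeasurableSet[m0] A ∧ μ A = 0 ∧ N ⊆ A}

lemma mem_nullAug_of_symmDiff {Ω : Type*} {m0 m : MeasurableSpace Ω}
    {μ : @MeasureTheory.Measure Ω m0} {A C N : Set Ω}
    (hC : MeasurableSet[m] C) (hN : MeasurableSet[m0] N) (hμN : μ N = 0)
    (hsub : symmDiff A C ⊆ N) : MeasurableSet[nullAug m0 μ m] A := by
  have hC' : MeasurableSet[nullAug m0 μ m] C :=
    (le_sup_left : m ≤ nullAug m0 μ m) _ hC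
  have hD : MeasurableSet[nullAug m0 μ m] (symmDiff A C) := by
    refine (le_sup_right :
      MeasurableSpace.generateFrom {N | ∃ A, MeasurableSet[m0] A ∧ μ A = 0 ∧ N ⊆ A}
        ≤ nullAug m0 μ m) _ ?_
    exact MeasurableSpace.measurableSet_generateFrom ⟨N, hN, hμN, hsub⟩
  have hkey : symmDiff C (symmDiff A C) = A := by
    rw [symmDiff_comm A C, symmDiff_symmDiff_cancel_left]
  rw [← hkey]
  exact hC'.symmDiff hD

lemma rawFilt_mono {Ω : Type*} {E : Type*} [MeasurableSpace E] (W : ℝ → Ω → E)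
    (t s s' : ℝ) (h : s ≤ s') : rawFilt W t s ≤ rawFilt W t s' := by
  refine iSup₂_le fun r hr => ?_
  exact le_iSup₂ (f := fun v (_ : v ∈ Set.Icc t s') =>
    MeasurableSpace.comap (W v) inferInstance) r ⟨hr.1, hr.2.trans h⟩

lemma measurable_rawFilt {Ω : Type*} {E : Type*} [MeasurableSpace E] (W : ℝ → Ω → E)
    {t s r : ℝ} (hr : r ∈ Set.Icc t s) : Measurable[rawFilt W t s] (W r) :=
  measurable_iff_comap_le.mpr (le_iSup₂ (f := fun v (_ : v ∈ Set.Icc t s) =>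
    MeasurableSpace.comap (W v) inferInstance) r hr)

lemma incrFilt_le_rawFilt {Ω : Type*} {d' : ℕ} (W : ℝ → Ω → Fin d' → ℝ)
    (t u s : ℝ) (htu : t ≤ u) (hus : u ≤ s) : incrFilt W u s ≤ rawFilt W t s := by
  refine iSup₂_le fun r hr => ?_
  rw [← measurable_iff_comap_le]
  exact (measurable_rawFilt W ⟨htu.trans hr.1, hr.2⟩).sub
    (measurable_rawFilt W ⟨htu, hus⟩)

/-- let `W` be a continuous process on `[t,T]` with `W_t = 0` (a Brownian
motion), `F^{t,0}` its raw filtration, `u ∈ [t,T]`, and `Pω` a regular conditional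
probability given `F^{t,0}_u`. For `P`-a.e. `ω`, the `Pω ω`-augmentation of the
increment filtration `F^{u,0}_s = σ(W_r − W_u : r ∈ [u,s])` coincides with the `Pω ω`-
augmentation of `F^{t,0}_s`, for all `s ∈ [u,T]`; in particular every `F^{t,0}_s`-set
belongs to the `Pω ω`-augmentation of `F^{u,0}_s`. -/
theorem conditional_augmented_filtrations_coincide
    {Ω : Type*} [mF : MeasurableSpace Ω] (P : Measure Ω) [IsProbabilityMeasure P]
    (m0 : MeasurableSpace Ω) (hm0 : m0 ≤ mF)
    {d' : ℕ} (t u T : ℝ) (htu : t ≤ u) (huT : u ≤ T)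
    (W : ℝ → Ω → Fin d' → ℝ)
    (hWc : ∀ ω, Continuous fun s => W s ω) (hW0 : ∀ ω, W t ω = 0)
    (hWm : rawFilt W t T ≤ m0)
    -- `Pω` is a regular conditional probability given `F^{t,0}_u`
    (Pω : Ω → @MeasureTheory.Measure Ω m0)
    (hprob : ∀ ω, IsProbabilityMeasure (Pω ω))
    (hmeas : ∀ A : Set Ω, MeasurableSet[m0] A →
      Measurable[rawFilt W t u] fun ω => Pω ω A)
    (hcond : ∀ A : Set Ω, MeasurableSet[m0] A →
      (fun ω => (Pω ω A).toReal) =ᵐ[P] P[A.indicator (fun _ => (1:ℝ)) | rawFilt W t u]) :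
    ∀ᵐ ω ∂P, ∀ s, u ≤ s → s ≤ T →
      nullAug m0 (Pω ω) (incrFilt W u s) = nullAug m0 (Pω ω) (rawFilt W t s) ∧
      ∀ A : Set Ω, MeasurableSet[rawFilt W t s] A →
        MeasurableSet[nullAug m0 (Pω ω) (incrFilt W u s)] A := by
  classical
  have hm₁0 : rawFilt W t u ≤ m0 := (rawFilt_mono W t u T huT).trans hWm
  have hm₁F : rawFilt W t u ≤ mF := hm₁0.trans hm0
  -- countable dense set of times in [t,u]
  set D : Set ℝ :=
    insert t (insert u {r : ℝ | r ∈ Set.Icc t u ∧ ∃ q : ℚ, (q : ℝ) = r}) with hD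
  have hDcount : D.Countable := by
    refine (Set.Countable.insert _ (Set.Countable.insert _ ?_))
    exact (Set.countable_range ((↑) : ℚ → ℝ)).mono fun r hr => hr.2
  have hDsub : D ⊆ Set.Icc t u := by
    intro r hr
    rcases hr with rfl | rfl | h
    · exact ⟨le_refl _, htu⟩
    · exact ⟨htu, le_refl _⟩
    · exact h.1
  have htD : t ∈ D := Set.mem_insert _ _
  have huD : u ∈ D := Set.mem_insert_of_mem _ (Set.mem_insert _ _)
  -- density argument
  have hdense : ∀ f g : ℝ → (Fin d' → ℝ), Continuous f → Continuous g →
      (∀ r ∈ D, f r = g r) → ∀ r ∈ Set.Icc t u, f r = g r := by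
    intro f g hf hg hfg r hr
    rcases eq_or_lt_of_le hr.1 with rfl | htr
    · exact hfg _ htD
    rcases eq_or_lt_of_le hr.2 with rfl | hru
    · exact hfg _ huD
    have hC : IsClosed {x : ℝ | f x = g x} := isClosed_eq hf hg
    have hrD : r ∈ closure D := by
      rw [Metric.mem_closure_iff]
      intro ε hε
      obtain ⟨a, ha⟩ := exists_rat_btwn (show max t (r - ε) < r from
        max_lt htr (by linarith))
      refine ⟨(a : ℝ), ?_, ?_⟩
      · refine Set.mem_insert_of_mem _ (Set.mem_insert_of_mem _ ?_)
        exact ⟨⟨(le_max_left _ _).trans ha.1.le, (ha.2.trans hru).le⟩, ⟨a, rfl⟩⟩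
      · rw [Real.dist_eq, abs_lt]
        have := (le_max_right t (r - ε)).trans_lt ha.1
        constructor <;> linarith [ha.2]
    have : closure D ⊆ {x : ℝ | f x = g x} :=
      closure_minimal (fun x hx => hfg x hx) hC
    exact this hrD
  -- separating family of half-spaces
  set B : Fin d' × ℚ → Set (Fin d' → ℝ) := fun p => {x | x p.1 < (p.2 : ℝ)} with hBdef
  have hBmeas : ∀ p, MeasurableSet (B p) := fun p =>
    measurableSet_lt (measurable_pi_apply _) measurable_const
  set A : ℝ → Fin d' × ℚ → Set Ω := fun r p => (W r) ⁻¹' (B p) with hAdef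
  have hAm₁ : ∀ r ∈ D, ∀ p, MeasurableSet[rawFilt W t u] (A r p) := fun r hr p =>
    (measurable_rawFilt W (hDsub hr)) (hBmeas p)
  have hAm0 : ∀ r ∈ D, ∀ p, MeasurableSet[m0] (A r p) := fun r hr p =>
    hm₁0 _ (hAm₁ r hr p)
  -- key a.e. statement
  have key : ∀ᵐ ω ∂P, ∀ r ∈ D, ∀ p : Fin d' × ℚ,
      (Pω ω (A r p)).toReal = (A r p).indicator (fun _ => (1:ℝ)) ω := by
    rw [ae_ball_iff hDcount]
    intro r hr
    rw [ae_all_iff]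
    intro p
    have hsm : StronglyMeasurable[rawFilt W t u]
        ((A r p).indicator fun _ => (1:ℝ)) :=
      StronglyMeasurable.indicator stronglyMeasurable_const (hAm₁ r hr p)
    have hAmF : MeasurableSet[mF] (A r p) := hm0 _ (hAm0 r hr p)
    have hint : Integrable ((A r p).indicator fun _ => (1:ℝ)) P :=
      MeasureTheory.Integrable.indicator (μ := P) (integrable_const (1:ℝ)) hAmF
    have heq : P[(A r p).indicator (fun _ => (1:ℝ)) | rawFilt W t u]
        = (A r p).indicator (fun _ => (1:ℝ)) :=
      condExp_of_stronglyMeasurable hm₁F hsm hint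
    filter_upwards [hcond (A r p) (hAm0 r hr p)] with ω h
    rw [h, heq]
  -- main conclusion
  filter_upwards [key] with ω hω
  haveI := hprob ω
  -- the agreement set
  set G : Set Ω := ⋂ r ∈ D, (W r) ⁻¹' {W r ω} with hGdef
  have hGm0 : MeasurableSet[m0] G :=
    @MeasurableSet.biInter Ω ℝ m0 _ _ hDcount fun r hr =>
      hm₁0 _ ((measurable_rawFilt W (hDsub hr)) (measurableSet_singleton _))
  have hGagree : ∀ ω' ∈ G, ∀ r ∈ Set.Icc t u, W r ω' = W r ω := by
    intro ω' hω' r hr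
    refine hdense (fun x => W x ω') (fun x => W x ω) (hWc ω') (hWc ω) ?_ r hr
    intro x hx
    have := Set.mem_iInter₂.mp hω' x hx
    simpa using this
  -- the bad sets
  set E : ℝ → Fin d' × ℚ → Set Ω := fun r p =>
    if W r ω ∈ B p then (A r p)ᶜ else A r p with hEdef
  have hEnull : ∀ r ∈ D, ∀ p, Pω ω (E r p) = 0 := by
    intro r hr p
    have h := hω r hr p
    show Pω ω (if W r ω ∈ B p then (A r p)ᶜ else A r p) = 0
    by_cases hin : W r ω ∈ B p
    · rw [if_pos hin]
      have hω_mem : ω ∈ A r p := hin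
      rw [Set.indicator_of_mem hω_mem] at h
      have h1 : Pω ω (A r p) = 1 := (ENNReal.toReal_eq_one_iff _).mp h
      rw [prob_compl_eq_zero_iff (hAm0 r hr p)]
      exact h1
    · rw [if_neg hin]
      have hω_mem : ω ∉ A r p := hin
      rw [Set.indicator_of_notMem hω_mem] at h
      rcases (ENNReal.toReal_eq_zero_iff _).mp h with h0 | htop
      · exact h0
      · exact absurd htop (measure_ne_top _ _)
  have hGcnull : Pω ω Gᶜ = 0 := by
    have hcover : Gᶜ ⊆ ⋃ r ∈ D, ⋃ p : Fin d' × ℚ, E r p := by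
      intro ω' hω'
      rw [Set.mem_compl_iff, hGdef, Set.mem_iInter₂] at hω'
      push_neg at hω'
      obtain ⟨r, hr, hne⟩ := hω'
      have hne' : W r ω' ≠ W r ω := by simpa using hne
      obtain ⟨i, hi⟩ := Function.ne_iff.mp hne'
      rcases lt_or_gt_of_ne hi with hlt | hgt
      · obtain ⟨q, hq1, hq2⟩ := exists_rat_btwn hlt
        refine Set.mem_biUnion hr (Set.mem_iUnion.mpr ⟨(i, q), ?_⟩)
        have hnotin : W r ω ∉ B (i, q) := not_lt.mpr hq2.le
        show ω' ∈ (if W r ω ∈ B (i, q) then (A r (i, q))ᶜ else A r (i, q))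
        rw [if_neg hnotin]
        exact hq1
      · obtain ⟨q, hq1, hq2⟩ := exists_rat_btwn hgt
        refine Set.mem_biUnion hr (Set.mem_iUnion.mpr ⟨(i, q), ?_⟩)
        have hin : W r ω ∈ B (i, q) := hq1
        show ω' ∈ (if W r ω ∈ B (i, q) then (A r (i, q))ᶜ else A r (i, q))
        rw [if_pos hin]
        exact fun hmem => absurd hmem (not_lt.mpr hq2.le)
    refine measure_mono_null hcover ?_
    rw [measure_biUnion_null_iff hDcount]
    intro r hr
    rw [measure_iUnion_null_iff]
    exact fun p => hEnull r hr p
  -- now prove the statement for each s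
  intro s hus hsT
  have hraw_le : rawFilt W t s ≤ nullAug m0 (Pω ω) (incrFilt W u s) := by
    refine iSup₂_le fun r hr => ?_
    intro S hS
    obtain ⟨V, hV, rfl⟩ := MeasurableSpace.measurableSet_comap.mp hS
    rcases le_or_gt r u with hru | hur
    · -- r ≤ u : W r is a.s. constant under Pω ω
      refine mem_nullAug_of_symmDiff (C := if W r ω ∈ V then (Set.univ : Set Ω) else ∅)
        ?_ hGm0.compl hGcnull ?_
      · by_cases h : W r ω ∈ V
        · rw [if_pos h]; exact @MeasurableSet.univ Ω (incrFilt W u s)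
        · rw [if_neg h]; exact @MeasurableSet.empty Ω (incrFilt W u s)
      · intro ω' hω'
        by_contra hcon
        rw [Set.notMem_compl_iff] at hcon
        have hagree : W r ω' = W r ω := hGagree ω' hcon r ⟨hr.1, hru⟩
        rw [Set.mem_symmDiff] at hω'
        by_cases h : W r ω ∈ V
        · rw [if_pos h] at hω'
          rcases hω' with ⟨_, h2⟩ | ⟨_, _⟩
          · exact h2 (Set.mem_univ _)
          · exact ‹ω' ∉ W r ⁻¹' V› (by rw [Set.mem_preimage, hagree]; exact h)
        · rw [if_neg h] at hω'
          rcases hω' with ⟨h1, _⟩ | ⟨h1, _⟩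
          · exact h (by rw [← hagree]; exact h1)
          · exact h1
    · -- u < r ≤ s : W r = (W r − W u) + W u ω up to null
      have hur' : u ≤ r := hur.le
      have hWincr : Measurable[incrFilt W u s] (fun ω' => W r ω' - W u ω') :=
        measurable_iff_comap_le.mpr (le_iSup₂ (f := fun v (_ : v ∈ Set.Icc u s) =>
          MeasurableSpace.comap (fun ω' => W v ω' - W u ω') inferInstance) r ⟨hur', hr.2⟩)
      refine mem_nullAug_of_symmDiff
        (C := (fun ω' => (W r ω' - W u ω') + W u ω) ⁻¹' V)
        ?_ hGm0.compl hGcnull ?_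
      · exact ((measurable_add_const (W u ω)).comp hWincr) hV
      · intro ω' hω'
        by_contra hcon
        rw [Set.notMem_compl_iff] at hcon
        have hagree : W u ω' = W u ω := hGagree ω' hcon u ⟨htu, le_refl _⟩
        rw [Set.mem_symmDiff] at hω'
        have hval : W r ω' - W u ω' + W u ω = W r ω' := by
          rw [hagree]; abel
        rcases hω' with ⟨h1, h2⟩ | ⟨h1, h2⟩
        · exact h2 (by rw [Set.mem_preimage, hval]; exact h1)
        · exact h2 (by rw [Set.mem_preimage, hval] at h1; exact h1)
  have hincr_le : incrFilt W u s ≤ rawFilt W t s := incrFilt_le_rawFilt W t u s htu hus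
  have h1 : nullAug m0 (Pω ω) (rawFilt W t s) ≤ nullAug m0 (Pω ω) (incrFilt W u s) :=
    sup_le hraw_le le_sup_right
  have h2 : nullAug m0 (Pω ω) (incrFilt W u s) ≤ nullAug m0 (Pω ω) (rawFilt W t s) :=
    sup_le_sup_right hincr_le _
  refine ⟨le_antisymm h2 h1, fun S hS => ?_⟩
  exact hraw_le _ hS

end
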